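/- Let L₃ be the 3-dimensional complex algebra with basis e₁, e₂, e₃ and nonzero products e₂e₃ = −e₂, e₃e₂ = e₂, e₃e₃ = e₁. A linear map g : L₃ → L₃ is an algebra automorphism if and only if its matrix with respect to the basis (e₁,e₂,e₃) has the form with rows (1, 0, α₃), (0, α₅, α₆), (0, 0, 1) for some α₃, α₅, α₆ ∈ ℂ with α₅ ≠ 0. -/

import Mathlib

def mulL3 (a b : Fin 3 → ℂ) : Fin 3 → ℂ :=
  ![a 2 * b 2, a 2 * b 1 - a 1 * b 2, 0]

def eL3 (j : Fin 3) : Fin 3 → ℂ := fun j' => if j' = j then 1 else 0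

lemma toMatrix'_eL3 (g : (Fin 3 → ℂ) →ₗ[ℂ] (Fin 3 → ℂ)) (i j : Fin 3) :
    LinearMap.toMatrix' g i j = g (eL3 j) i := by
  rw [LinearMap.toMatrix'_apply]
  have h : (Pi.single j 1 : Fin 3 → ℂ) = eL3 j := by funext j'; simp [eL3, Pi.single_apply]
  rw [h]

theorem L3_automorphisms (g : (Fin 3 → ℂ) →ₗ[ℂ] (Fin 3 → ℂ)) :
    (Function.Bijective g ∧ ∀ x y : Fin 3 → ℂ, g (mulL3 x y) = mulL3 (g x) (g y)) ↔
    ∃ α₃ α₅ α₆ : ℂ, α₅ ≠ 0 ∧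
      LinearMap.toMatrix' g = !![1, 0, α₃; 0, α₅, α₆; 0, 0, 1] := by
  constructor
  · rintro ⟨hbij, hmul⟩
    have h22 : mulL3 (eL3 2) (eL3 2) = eL3 0 := by
      funext i; fin_cases i <;> simp [mulL3, eL3]
    have h11 : mulL3 (eL3 1) (eL3 1) = 0 := by
      funext i; fin_cases i <;> simp [mulL3, eL3]
    have h12 : mulL3 (eL3 1) (eL3 2) = (-1 : ℂ) • eL3 1 := by
      funext i; fin_cases i <;> simp [mulL3, eL3]
    have E22 := hmul (eL3 2) (eL3 2)
    rw [h22] at E22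
    have E11 := hmul (eL3 1) (eL3 1)
    rw [h11, map_zero] at E11
    have E12 := hmul (eL3 1) (eL3 2)
    rw [h12, map_smul] at E12
    have hb2 : g (eL3 1) 2 = 0 := by
      have := congrFun E11.symm 0
      simp [mulL3] at this
      exact this
    have hb0 : g (eL3 1) 0 = 0 := by
      have := congrFun E12 0
      simp [mulL3, hb2] at this
      exact this
    have hb1c2 : g (eL3 1) 1 = g (eL3 1) 1 * g (eL3 2) 2 := by
      have := congrFun E12 1
      simp [mulL3, hb2] at this
      exact this
    have hb1 : g (eL3 1) 1 ≠ 0 := by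
      intro h
      have hz : g (eL3 1) = g 0 := by
        rw [map_zero]; funext i; fin_cases i <;> simp [hb0, h, hb2]
      have := congrFun (hbij.injective hz) 1
      simp [eL3] at this
    have hc2 : g (eL3 2) 2 = 1 := by
      have h' : g (eL3 1) 1 * (g (eL3 2) 2 - 1) = 0 := by linear_combination -hb1c2
      rcases mul_eq_zero.mp h' with h | h
      · exact absurd h hb1
      · linear_combination h
    have ha0 : g (eL3 0) 0 = 1 := by
      have := congrFun E22 0
      simp [mulL3, hc2] at this
      exact this
    have ha1 : g (eL3 0) 1 = 0 := by
      have := congrFun E22 1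
      simp [mulL3] at this
      linear_combination this
    have ha2 : g (eL3 0) 2 = 0 := by
      have := congrFun E22 2
      simp [mulL3] at this
      exact this
    refine ⟨g (eL3 2) 0, g (eL3 1) 1, g (eL3 2) 1, hb1, ?_⟩
    ext i j
    rw [toMatrix'_eL3]
    fin_cases i <;> fin_cases j <;>
      simp [ha0, ha1, ha2, hb0, hb2, hc2, Matrix.vecHead, Matrix.vecTail]
  · rintro ⟨α₃, α₅, α₆, h5, hM⟩
    have hgeq : g = Matrix.toLin' !![1, 0, α₃; 0, α₅, α₆; 0, 0, 1] := by
      rw [← hM]; simp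
    have hg : ∀ x : Fin 3 → ℂ, g x = ![x 0 + α₃ * x 2, α₅ * x 1 + α₆ * x 2, x 2] := by
      intro x
      rw [hgeq]
      funext i
      fin_cases i <;>
        simp [Matrix.toLin'_apply, Matrix.mulVec, dotProduct, Fin.sum_univ_three]
    constructor
    · refine Function.bijective_iff_has_inverse.mpr
        ⟨fun x => ![x 0 - α₃ * x 2, α₅⁻¹ * (x 1 - α₆ * x 2), x 2], ?_, ?_⟩
      · intro x
        rw [hg]
        funext i
        fin_cases i <;> simp <;> field_simp <;> ring
      · intro x
        rw [hg]
        funext i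
        fin_cases i <;> simp <;> field_simp <;> ring
    · intro x y
      rw [hg, hg, hg]
      funext i
      fin_cases i <;> simp [mulL3] <;> ring
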